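/- Let X be a type, t : X, and A B : X → X → Prop with A symmetric (∀ x y, A x y → A y x), and let Step, the cost set C, and RII be as defined. Suppose there exists a family P : ℕ → X such that RII(P m) = (m : ℕ∞) for every m : ℕ. Then: (a) for all m m' : ℕ, Relation.ReflTransGen A (P m) (P m') implies m = m'; and (b) the quotient of X by the equivalence relation generated by A (EqvGen A) is infinite. (This is the paper's Corollary: since RII(P(m,n)) = m, there exist infinitely many (1,3) homotopy classes of knot projections.) -/

import Mathlib

/-- One counted step: an `A`-step keeps the counter, a `B`-step increments it. -/
def Step {X : Type*} (A B : X → X → Prop) : X × ℕ → X × ℕ → Prop :=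
  fun p q => (A p.1 q.1 ∧ q.2 = p.2) ∨ (B p.1 q.1 ∧ q.2 = p.2 + 1)

/-- The cost set of `P`: numbers of `B`-steps in reducing sequences from `P` to `t`. -/
def costSet {X : Type*} (t : X) (A B : X → X → Prop) (P : X) : Set ℕ :=
  {n : ℕ | Relation.ReflTransGen (Step A B) (P, 0) (t, n)}

/-- The RII number of `P`: the infimum in `ℕ∞` of the cost set. -/
noncomputable def RII {X : Type*} (t : X) (A B : X → X → Prop) (P : X) : ℕ∞ :=
  sInf {n : ℕ∞ | ∃ m ∈ costSet t A B P, (m : ℕ∞) = n}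

private lemma costSet_subset {X : Type*} (t : X) (A B : X → X → Prop)
    {x y : X} (h : A x y) : costSet t A B y ⊆ costSet t A B x := by
  intro n hn
  simp only [costSet, Set.mem_setOf_eq] at hn ⊢
  exact Relation.ReflTransGen.head (b := (y, 0)) (Or.inl ⟨h, rfl⟩) hn

private lemma RII_eq {X : Type*} (t : X) (A B : X → X → Prop)
    (hA : ∀ x y, A x y → A y x) {x y : X}
    (h : Relation.ReflTransGen A x y) : RII t A B x = RII t A B y := by
  induction h with
  | refl => rfl
  | tail hxz hzy ih =>
    rw [ih]
    have : costSet t A B _ = costSet t A B _ :=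
      le_antisymm (costSet_subset t A B (hA _ _ hzy)) (costSet_subset t A B hzy)
    unfold RII
    rw [this]

theorem infinitely_many_homotopy_classes {X : Type*} (t : X) (A B : X → X → Prop)
    (hA : ∀ x y, A x y → A y x)
    (P : ℕ → X) (hP : ∀ m : ℕ, RII t A B (P m) = (m : ℕ∞)) :
    (∀ m m' : ℕ, Relation.ReflTransGen A (P m) (P m') → m = m') ∧
      Infinite (Quot (Relation.EqvGen A)) := by
  have key : ∀ m m' : ℕ, Relation.ReflTransGen A (P m) (P m') → m = m' := by
    intro m m' h
    have := RII_eq t A B hA h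
    rw [hP, hP] at this
    exact_mod_cast this
  refine ⟨key, ?_⟩
  have heqv : ∀ x y : X, Relation.EqvGen A x y → Relation.ReflTransGen A x y := by
    intro x y h
    induction h with
    | rel _ _ h => exact Relation.ReflTransGen.single h
    | refl => exact Relation.ReflTransGen.refl
    | symm a b _ ih => exact (@Relation.ReflTransGen.symmetric _ A ⟨hA⟩).symm _ _ ih
    | trans _ _ _ _ _ ih1 ih2 => exact ih1.trans ih2
  refine Infinite.of_injective (fun m => Quot.mk (Relation.EqvGen A) (P m)) ?_
  intro m m' h
  have h2 : Relation.EqvGen (Relation.EqvGen A) (P m) (P m') := Quot.eqvGen_exact h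
  have flat : Relation.EqvGen A (P m) (P m') := by
    rw [(Relation.EqvGen.is_equivalence A).eqvGen_iff] at h2
    exact h2
  exact key m m' (heqv _ _ flat)
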